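/- arXiv:2312.04341 — 4 statements merged into one kernel-verified Lean document; each statement's English description precedes it below -/
import Mathlib

section
/- Let φ be a symmetric bilinear form on ℝ^(n+1). Let u, v, w, x, y, z be vectors in ℝ^(n+1). Consider the six equations: φ(u,x)=0, φ(v,y)=0, φ(w,z)=0, φ(u+v, y+z)=0, φ(v+w, x+y)=0, φ(u+v+w, x+y+z)=0. Then any five of these six equations imply the sixth. -/
/-- Any five of the six conjugacy conditions between the vertices and the
Laplace points of two planar quads, relative to a quadric given by a symmetric
bilinear form `φ`, imply the sixth one. -/
theorem stmt0 (n : ℕ) (φ : LinearMap.BilinForm ℝ (Fin (n + 1) → ℝ))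
    (hsymm : ∀ a b, φ a b = φ b a)
    (u v w x y z : Fin (n + 1) → ℝ) :
    ∀ k : Fin 6,
      (∀ j : Fin 6, j ≠ k →
        ![φ u x = 0, φ v y = 0, φ w z = 0,
          φ (u + v) (y + z) = 0, φ (v + w) (x + y) = 0,
          φ (u + v + w) (x + y + z) = 0] j) →
      ![φ u x = 0, φ v y = 0, φ w z = 0,
        φ (u + v) (y + z) = 0, φ (v + w) (x + y) = 0,
        φ (u + v + w) (x + y + z) = 0] k := by
  have key : φ (u + v + w) (x + y + z)
      = φ u x - φ v y + φ w z + φ (u + v) (y + z) + φ (v + w) (x + y) := by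
    simp only [map_add, LinearMap.add_apply]
    ring
  intro k h
  fin_cases k
  · have h1 : φ v y = 0 := h 1 (by decide)
    have h2 : φ w z = 0 := h 2 (by decide)
    have h3 : φ (u + v) (y + z) = 0 := h 3 (by decide)
    have h4 : φ (v + w) (x + y) = 0 := h 4 (by decide)
    have h5 : φ (u + v + w) (x + y + z) = 0 := h 5 (by decide)
    show φ u x = 0
    linarith
  · have h0 : φ u x = 0 := h 0 (by decide)
    have h2 : φ w z = 0 := h 2 (by decide)
    have h3 : φ (u + v) (y + z) = 0 := h 3 (by decide)
    have h4 : φ (v + w) (x + y) = 0 := h 4 (by decide)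
    have h5 : φ (u + v + w) (x + y + z) = 0 := h 5 (by decide)
    show φ v y = 0
    linarith
  · have h0 : φ u x = 0 := h 0 (by decide)
    have h1 : φ v y = 0 := h 1 (by decide)
    have h3 : φ (u + v) (y + z) = 0 := h 3 (by decide)
    have h4 : φ (v + w) (x + y) = 0 := h 4 (by decide)
    have h5 : φ (u + v + w) (x + y + z) = 0 := h 5 (by decide)
    show φ w z = 0
    linarith
  · have h0 : φ u x = 0 := h 0 (by decide)
    have h1 : φ v y = 0 := h 1 (by decide)
    have h2 : φ w z = 0 := h 2 (by decide)
    have h4 : φ (v + w) (x + y) = 0 := h 4 (by decide)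
    have h5 : φ (u + v + w) (x + y + z) = 0 := h 5 (by decide)
    show φ (u + v) (y + z) = 0
    linarith
  · have h0 : φ u x = 0 := h 0 (by decide)
    have h1 : φ v y = 0 := h 1 (by decide)
    have h2 : φ w z = 0 := h 2 (by decide)
    have h3 : φ (u + v) (y + z) = 0 := h 3 (by decide)
    have h5 : φ (u + v + w) (x + y + z) = 0 := h 5 (by decide)
    show φ (v + w) (x + y) = 0
    linarith
  · have h0 : φ u x = 0 := h 0 (by decide)
    have h1 : φ v y = 0 := h 1 (by decide)
    have h2 : φ w z = 0 := h 2 (by decide)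
    have h3 : φ (u + v) (y + z) = 0 := h 3 (by decide)
    have h4 : φ (v + w) (x + y) = 0 := h 4 (by decide)
    show φ (u + v + w) (x + y + z) = 0
    linarith
end

section
/- Let φ be a symmetric bilinear form on a real vector space V. Let O₁₂=[u], O₁₁=[v], O₂₁=[w], O₂₂=[u+v+w] and P₁₂=[x], P₁₁=[y], P₂₁=[z], P₂₂=[x+y+z] be the vertices of two planar quads with Laplace points [v+w], [u+v] and [y+z], [x+y] respectively. If φ(u,x)=0, φ(v,y)=0, φ(w,z)=0, φ(u+v,y+z)=0, and φ(v+w,x+y)=0, then φ(u+v+w, x+y+z)=0. -/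
/-- One instance of the six-conditions lemma: five conjugacy conditions between
the vertices and Laplace points of two planar quads imply the sixth one,
`φ(u+v+w, x+y+z) = 0`. -/
theorem stmt9 (V : Type*) [AddCommGroup V] [Module ℝ V]
    (φ : LinearMap.BilinForm ℝ V)
    (hsymm : ∀ a b, φ a b = φ b a)
    (u v w x y z : V)
    (h1 : φ u x = 0) (h2 : φ v y = 0) (h3 : φ w z = 0)
    (h4 : φ (u + v) (y + z) = 0) (h5 : φ (v + w) (x + y) = 0) :
    φ (u + v + w) (x + y + z) = 0 := by
  simp only [map_add, LinearMap.add_apply] at *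
  linarith
end

section
/- Let P : ℤ × [2] → ℝ² be a circular net (each quad P(i,1), P(i+1,1), P(i+1,2), P(i,2) is concyclic) such that for j = 1, 2 the points {P(i,j) : i ∈ ℤ} lie on a line H_j. Let V_i denote the line through P(i,1) and P(i,2). Then all lines V_{2i} (even index) are mutually parallel, and all lines V_{2i+1} (odd index) are mutually parallel. -/
lemma vieta (c₁ c₂ r p₁ p₂ u₁ u₂ a a' : ℝ) (hne : a ≠ a')
    (h : (p₁ + a*u₁ - c₁)^2 + (p₂ + a*u₂ - c₂)^2 = r^2)
    (h' : (p₁ + a'*u₁ - c₁)^2 + (p₂ + a'*u₂ - c₂)^2 = r^2) :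
    (a + a')*(u₁^2+u₂^2) = 2*(u₁*(c₁-p₁) + u₂*(c₂-p₂)) ∧
    r^2 - ((p₁-c₁)^2+(p₂-c₂)^2) = -(a*a')*(u₁^2+u₂^2) := by
  have key : (a - a') * ((a + a')*(u₁^2+u₂^2) - 2*(u₁*(c₁-p₁) + u₂*(c₂-p₂))) = 0 := by
    linear_combination h - h'
  have hsum : (a + a')*(u₁^2+u₂^2) = 2*(u₁*(c₁-p₁) + u₂*(c₂-p₂)) := by
    rcases mul_eq_zero.mp key with h0 | h0
    · exact absurd (sub_eq_zero.mp h0) hne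
    · linarith
  exact ⟨hsum, by linear_combination -h + a * hsum⟩

lemma core (p₁ p₂ q₁ q₂ u₁ u₂ v₁ v₂ a₀ a₁ a₂ b₀ b₁ b₂ : ℝ)
    (hu : u₁^2 + u₂^2 ≠ 0) (hv : v₁^2 + v₂^2 ≠ 0)
    (ha01 : a₀ ≠ a₁) (ha12 : a₁ ≠ a₂) (hb01 : b₀ ≠ b₁) (hb12 : b₁ ≠ b₂)
    (hXY : ¬(p₁ + a₁*u₁ = q₁ + b₁*v₁ ∧ p₂ + a₁*u₂ = q₂ + b₁*v₂))
    (circ0 : ∃ c₁ c₂ r : ℝ,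
      (p₁ + a₀*u₁ - c₁)^2 + (p₂ + a₀*u₂ - c₂)^2 = r^2 ∧
      (p₁ + a₁*u₁ - c₁)^2 + (p₂ + a₁*u₂ - c₂)^2 = r^2 ∧
      (q₁ + b₀*v₁ - c₁)^2 + (q₂ + b₀*v₂ - c₂)^2 = r^2 ∧
      (q₁ + b₁*v₁ - c₁)^2 + (q₂ + b₁*v₂ - c₂)^2 = r^2)
    (circ1 : ∃ c₁ c₂ r : ℝ,
      (p₁ + a₁*u₁ - c₁)^2 + (p₂ + a₁*u₂ - c₂)^2 = r^2 ∧
      (p₁ + a₂*u₁ - c₁)^2 + (p₂ + a₂*u₂ - c₂)^2 = r^2 ∧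
      (q₁ + b₁*v₁ - c₁)^2 + (q₂ + b₁*v₂ - c₂)^2 = r^2 ∧
      (q₁ + b₂*v₁ - c₁)^2 + (q₂ + b₂*v₂ - c₂)^2 = r^2) :
    (q₁ + b₂*v₁ - (p₁ + a₂*u₁)) * (q₂ + b₀*v₂ - (p₂ + a₀*u₂))
      - (q₂ + b₂*v₂ - (p₂ + a₂*u₂)) * (q₁ + b₀*v₁ - (p₁ + a₀*u₁)) = 0 := by
  by_cases hX : u₁*v₂ - u₂*v₁ = 0
  · -- parallel lines case
    obtain ⟨μ, hμ1, hμ2⟩ : ∃ μ : ℝ, v₁ = μ*u₁ ∧ v₂ = μ*u₂ :=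
      ⟨(u₁*v₁ + u₂*v₂)/(u₁^2+u₂^2),
        by field_simp; linear_combination (-u₂)*hX,
        by field_simp; linear_combination u₁*hX⟩
    have hμ0 : μ ≠ 0 := by
      intro h0; apply hv; rw [hμ1, hμ2, h0]; ring
    -- per-circle relation
    have R : ∀ (A A' B B' : ℝ), A ≠ A' → B ≠ B' →
        (∃ c₁ c₂ r : ℝ,
          (p₁ + A*u₁ - c₁)^2 + (p₂ + A*u₂ - c₂)^2 = r^2 ∧
          (p₁ + A'*u₁ - c₁)^2 + (p₂ + A'*u₂ - c₂)^2 = r^2 ∧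
          (q₁ + B*v₁ - c₁)^2 + (q₂ + B*v₂ - c₂)^2 = r^2 ∧
          (q₁ + B'*v₁ - c₁)^2 + (q₂ + B'*v₂ - c₂)^2 = r^2) →
        (A + A')*(u₁^2+u₂^2) - μ*(B + B')*(u₁^2+u₂^2)
          = 2*(u₁*(q₁-p₁) + u₂*(q₂-p₂)) := by
      intro A A' B B' hA hB ⟨c₁, c₂, r, e1, e2, e3, e4⟩
      have S1 := (vieta c₁ c₂ r p₁ p₂ u₁ u₂ A A' hA e1 e2).1
      have S2 := (vieta c₁ c₂ r q₁ q₂ v₁ v₂ B B' hB e3 e4).1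
      rw [hμ1, hμ2] at S2
      have key : μ * ((A + A')*(u₁^2+u₂^2) - μ*(B + B')*(u₁^2+u₂^2)
          - 2*(u₁*(q₁-p₁) + u₂*(q₂-p₂))) = 0 := by
        linear_combination μ * S1 - S2
      rcases mul_eq_zero.mp key with h0 | h0
      · exact absurd h0 hμ0
      · linarith
    have R0 := R a₀ a₁ b₀ b₁ ha01 hb01 circ0
    have R1 := R a₁ a₂ b₁ b₂ ha12 hb12 circ1
    have hd : a₂ - a₀ = μ*(b₂ - b₀) := by
      have hU : (u₁^2+u₂^2) ≠ 0 := hu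
      have : (a₂ - a₀ - μ*(b₂ - b₀)) * (u₁^2+u₂^2) = 0 := by linear_combination R1 - R0
      rcases mul_eq_zero.mp this with h0 | h0
      · linarith
      · exact absurd h0 hU
    rw [hμ1, hμ2]
    linear_combination ((q₁-p₁)*u₂ - (q₂-p₂)*u₁) * hd
  · -- transversal case
    obtain ⟨α, β, hO1, hO2⟩ :
        ∃ α β : ℝ, q₁ = p₁ + α*u₁ + β*v₁ ∧ q₂ = p₂ + α*u₂ + β*v₂ := by
      refine ⟨((q₁-p₁)*v₂ - (q₂-p₂)*v₁)/(u₁*v₂ - u₂*v₁),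
        (u₁*(q₂-p₂) - u₂*(q₁-p₁))/(u₁*v₂ - u₂*v₁), ?_, ?_⟩ <;>
      · field_simp [show v₂ * u₁ - v₁ * u₂ ≠ 0 from fun h => hX (by linear_combination h)]
        ring
    -- power of O relation per circle
    have Pw : ∀ (A A' B B' : ℝ), A ≠ A' → B ≠ B' →
        (∃ c₁ c₂ r : ℝ,
          (p₁ + A*u₁ - c₁)^2 + (p₂ + A*u₂ - c₂)^2 = r^2 ∧
          (p₁ + A'*u₁ - c₁)^2 + (p₂ + A'*u₂ - c₂)^2 = r^2 ∧
          (q₁ + B*v₁ - c₁)^2 + (q₂ + B*v₂ - c₂)^2 = r^2 ∧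
          (q₁ + B'*v₁ - c₁)^2 + (q₂ + B'*v₂ - c₂)^2 = r^2) →
        (A - α)*(A' - α)*(u₁^2+u₂^2) = (B + β)*(B' + β)*(v₁^2+v₂^2) := by
      intro A A' B B' hA hB ⟨c₁, c₂, r, e1, e2, e3, e4⟩
      have hA' : A - α ≠ A' - α := fun h => hA (by linarith [sub_left_injective.eq_iff.mp h])
      have hB' : B + β ≠ B' + β := fun h => hB (by linarith)
      have e1' : ((p₁+α*u₁) + (A-α)*u₁ - c₁)^2 + ((p₂+α*u₂) + (A-α)*u₂ - c₂)^2 = r^2 := by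
        linear_combination e1
      have e2' : ((p₁+α*u₁) + (A'-α)*u₁ - c₁)^2 + ((p₂+α*u₂) + (A'-α)*u₂ - c₂)^2 = r^2 := by
        linear_combination e2
      have e3' : ((p₁+α*u₁) + (B+β)*v₁ - c₁)^2 + ((p₂+α*u₂) + (B+β)*v₂ - c₂)^2 = r^2 := by
        rw [hO1, hO2] at e3; linear_combination e3
      have e4' : ((p₁+α*u₁) + (B'+β)*v₁ - c₁)^2 + ((p₂+α*u₂) + (B'+β)*v₂ - c₂)^2 = r^2 := by
        rw [hO1, hO2] at e4; linear_combination e4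
      have Pu := (vieta c₁ c₂ r (p₁+α*u₁) (p₂+α*u₂) u₁ u₂ (A-α) (A'-α) hA' e1' e2').2
      have Pv := (vieta c₁ c₂ r (p₁+α*u₁) (p₂+α*u₂) v₁ v₂ (B+β) (B'+β) hB' e3' e4').2
      linear_combination Pu - Pv
    have P0 := Pw a₀ a₁ b₀ b₁ ha01 hb01 circ0
    have P1 := Pw a₁ a₂ b₁ b₂ ha12 hb12 circ1
    have hst : (a₀ - α)*(b₂ + β) - (a₂ - α)*(b₀ + β) = 0 := by
      by_cases hs1 : a₁ - α = 0
      · have ht1 : b₁ + β ≠ 0 := by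
          intro h0
          apply hXY
          constructor
          · rw [hO1]; linear_combination u₁ * hs1 - v₁ * h0
          · rw [hO2]; linear_combination u₂ * hs1 - v₂ * h0
        have ht0 : b₀ + β = 0 := by
          rw [hs1] at P0
          have : (b₀ + β) * ((b₁ + β) * (v₁^2+v₂^2)) = 0 := by linear_combination -P0
          rcases mul_eq_zero.mp this with h0 | h0
          · exact h0
          · exact absurd (mul_eq_zero.mp h0) (by push_neg; exact ⟨ht1, hv⟩)
        have ht2 : b₂ + β = 0 := by
          rw [hs1] at P1
          have : (b₂ + β) * ((b₁ + β) * (v₁^2+v₂^2)) = 0 := by linear_combination -P1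
          rcases mul_eq_zero.mp this with h0 | h0
          · exact h0
          · exact absurd (mul_eq_zero.mp h0) (by push_neg; exact ⟨ht1, hv⟩)
        rw [ht0, ht2]; ring
      · have key : ((a₁ - α) * (u₁^2+u₂^2)) *
            ((a₀ - α)*(b₂ + β) - (a₂ - α)*(b₀ + β)) = 0 := by
          linear_combination (b₂ + β) * P0 - (b₀ + β) * P1
        rcases mul_eq_zero.mp key with h0 | h0
        · exact absurd (mul_eq_zero.mp h0) (by push_neg; exact ⟨hs1, hu⟩)
        · exact h0
    rw [hO1, hO2]
    linear_combination (u₁*v₂ - u₂*v₁) * hst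

lemma dist_sq_coord (x y : EuclideanSpace ℝ (Fin 2)) :
    (x 0 - y 0)^2 + (x 1 - y 1)^2 = dist x y ^ 2 := by
  rw [EuclideanSpace.dist_eq, Real.sq_sqrt (by positivity)]
  simp [Fin.sum_univ_two, Real.dist_eq, sq_abs]

lemma sumsq_ne_zero {w : EuclideanSpace ℝ (Fin 2)} (hw : w ≠ 0) :
    w 0 ^ 2 + w 1 ^ 2 ≠ 0 := by
  intro h0
  apply hw
  have h1 : w 0 = 0 := by nlinarith [sq_nonneg (w 0), sq_nonneg (w 1)]
  have h2 : w 1 = 0 := by nlinarith [sq_nonneg (w 0), sq_nonneg (w 1)]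
  ext k
  fin_cases k
  · exact h1
  · exact h2

lemma span_eq_of_cross {w w' : EuclideanSpace ℝ (Fin 2)} (hw : w ≠ 0) (hw' : w' ≠ 0)
    (h : w 0 * w' 1 - w 1 * w' 0 = 0) :
    (ℝ ∙ w) = (ℝ ∙ w') := by
  have hU := sumsq_ne_zero hw
  have h0 : w' 0 = ((w 0 * w' 0 + w 1 * w' 1)/(w 0^2 + w 1^2)) * w 0 := by
    field_simp
    linear_combination (-(w 1)) * h
  have h1 : w' 1 = ((w 0 * w' 0 + w 1 * w' 1)/(w 0^2 + w 1^2)) * w 1 := by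
    field_simp
    linear_combination (w 0) * h
  have hw'eq : w' = ((w 0 * w' 0 + w 1 * w' 1)/(w 0^2 + w 1^2)) • w := by
    ext k
    fin_cases k
    · simpa using h0
    · simpa using h1
  have hlam : IsUnit ((w 0 * w' 0 + w 1 * w' 1)/(w 0^2 + w 1^2)) := by
    rw [isUnit_iff_ne_zero]
    intro h0'
    apply hw'
    rw [hw'eq, h0', zero_smul]
  rw [hw'eq, Submodule.span_singleton_smul_eq hlam]

lemma parallel_of_span {A B A' B' : EuclideanSpace ℝ (Fin 2)}
    (h : (ℝ ∙ (B -ᵥ A)) = ℝ ∙ (B' -ᵥ A')) :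
    (affineSpan ℝ ({A, B} : Set (EuclideanSpace ℝ (Fin 2)))).Parallel
      (affineSpan ℝ {A', B'}) := by
  rw [AffineSubspace.parallel_iff_direction_eq_and_eq_bot_iff_eq_bot]
  constructor
  · rw [direction_affineSpan, direction_affineSpan, vectorSpan_pair_rev, vectorSpan_pair_rev]
    exact h
  · simp [affineSpan_eq_bot]
    exact iff_of_false (Set.insert_nonempty _ _).ne_empty (Set.insert_nonempty _ _).ne_empty


/-- Alternating parallelism for a circular net `P : ℤ × [2] → ℝ²` whose two
parameter lines `{P(i,j) : i ∈ ℤ}` (j = 1, 2) are contained in lines: the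
transversal lines `V_i = P(i,1) ∨ P(i,2)` with even index are mutually
parallel, and those with odd index are mutually parallel. -/
theorem stmt12 (P : ℤ → Fin 2 → EuclideanSpace ℝ (Fin 2))
    -- the two parameter lines are contained in lines H₁, H₂
    (hcol : ∀ j : Fin 2, Collinear ℝ {x | ∃ i : ℤ, x = P i j})
    -- circular net: each elementary quad is concyclic
    (hcirc : ∀ i : ℤ, EuclideanGeometry.Cospherical
      ({P i 0, P (i + 1) 0, P (i + 1) 1, P i 1} : Set (EuclideanSpace ℝ (Fin 2))))
    -- genericity: the two points on each transversal line are distinct,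
    -- and consecutive points along each parameter line are distinct
    (hV : ∀ i : ℤ, P i 0 ≠ P i 1)
    (hH : ∀ (i : ℤ) (j : Fin 2), P i j ≠ P (i + 1) j) :
    (∀ i k : ℤ, (affineSpan ℝ ({P (2 * i) 0, P (2 * i) 1} : Set (EuclideanSpace ℝ (Fin 2)))).Parallel
      (affineSpan ℝ {P (2 * k) 0, P (2 * k) 1})) ∧
    (∀ i k : ℤ, (affineSpan ℝ ({P (2 * i + 1) 0, P (2 * i + 1) 1} : Set (EuclideanSpace ℝ (Fin 2)))).Parallel
      (affineSpan ℝ {P (2 * k + 1) 0, P (2 * k + 1) 1})) := by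
  obtain ⟨p, u, hu⟩ := (collinear_iff_exists_forall_eq_smul_vadd _).mp (hcol 0)
  obtain ⟨q, v, hv⟩ := (collinear_iff_exists_forall_eq_smul_vadd _).mp (hcol 1)
  choose a ha using fun i : ℤ => hu (P i 0) ⟨i, rfl⟩
  choose b hb using fun i : ℤ => hv (P i 1) ⟨i, rfl⟩
  have hcoord : ∀ (r : ℝ) (w z : EuclideanSpace ℝ (Fin 2)) (k : Fin 2),
      (r • w +ᵥ z) k = z k + r * w k := by
    intro r w z k
    simp [vadd_eq_add, PiLp.add_apply, PiLp.smul_apply, smul_eq_mul]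
    ring
  -- direction nonvanishing
  have hune : u ≠ 0 := by
    intro h0
    apply hH 0 0
    rw [ha 0, ha (0+1), h0]
    simp
  have hvne : v ≠ 0 := by
    intro h0
    apply hH 0 1
    rw [hb 0, hb (0+1), h0]
    simp
  have hu2 := sumsq_ne_zero hune
  have hv2 := sumsq_ne_zero hvne
  -- scalar distinctness
  have haa : ∀ i : ℤ, a i ≠ a (i+1) := fun i h => hH i 0 (by rw [ha i, ha (i+1), h])
  have hbb : ∀ i : ℤ, b i ≠ b (i+1) := fun i h => hH i 1 (by rw [hb i, hb (i+1), h])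
  -- circle equations in coordinates
  have hcir : ∀ i : ℤ, ∃ c₁ c₂ r : ℝ,
      (p 0 + a i * u 0 - c₁)^2 + (p 1 + a i * u 1 - c₂)^2 = r^2 ∧
      (p 0 + a (i+1) * u 0 - c₁)^2 + (p 1 + a (i+1) * u 1 - c₂)^2 = r^2 ∧
      (q 0 + b i * v 0 - c₁)^2 + (q 1 + b i * v 1 - c₂)^2 = r^2 ∧
      (q 0 + b (i+1) * v 0 - c₁)^2 + (q 1 + b (i+1) * v 1 - c₂)^2 = r^2 := by
    intro i
    obtain ⟨c, r, hc⟩ := hcirc i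
    have key : ∀ z : EuclideanSpace ℝ (Fin 2), dist z c = r →
        (z 0 - c 0)^2 + (z 1 - c 1)^2 = r^2 := by
      intro z hz
      rw [dist_sq_coord, hz]
    refine ⟨c 0, c 1, r, ?_, ?_, ?_, ?_⟩
    · have h := key _ (hc (P i 0) (by simp))
      rw [ha i, hcoord, hcoord] at h
      linear_combination h
    · have h := key _ (hc (P (i+1) 0) (by simp))
      rw [ha (i+1), hcoord, hcoord] at h
      linear_combination h
    · have h := key _ (hc (P i 1) (by simp))
      rw [hb i, hcoord, hcoord] at h
      linear_combination h
    · have h := key _ (hc (P (i+1) 1) (by simp))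
      rw [hb (i+1), hcoord, hcoord] at h
      linear_combination h
  -- coordinates of transversal vectors
  have hw0 : ∀ i : ℤ, (P i 1 -ᵥ P i 0) 0 = (q 0 + b i * v 0) - (p 0 + a i * u 0) := by
    intro i
    rw [ha i, hb i]
    simp only [vsub_eq_sub, PiLp.sub_apply, hcoord]
  have hw1 : ∀ i : ℤ, (P i 1 -ᵥ P i 0) 1 = (q 1 + b i * v 1) - (p 1 + a i * u 1) := by
    intro i
    rw [ha i, hb i]
    simp only [vsub_eq_sub, PiLp.sub_apply, hcoord]
  -- key two-step span equality
  have hkey : ∀ i : ℤ, (ℝ ∙ (P i 1 -ᵥ P i 0)) = ℝ ∙ (P (i+2) 1 -ᵥ P (i+2) 0) := by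
    intro i
    have hXYi : ¬(p 0 + a (i+1) * u 0 = q 0 + b (i+1) * v 0 ∧
        p 1 + a (i+1) * u 1 = q 1 + b (i+1) * v 1) := by
      rintro ⟨h1, h2⟩
      apply hV (i+1)
      rw [ha (i+1), hb (i+1)]
      ext k
      fin_cases k
      · rw [hcoord, hcoord]; exact h1
      · rw [hcoord, hcoord]; exact h2
    have hc := core (p 0) (p 1) (q 0) (q 1) (u 0) (u 1) (v 0) (v 1)
      (a i) (a (i+1)) (a (i+1+1)) (b i) (b (i+1)) (b (i+1+1))
      hu2 hv2 (haa i) (haa (i+1)) (hbb i) (hbb (i+1)) hXYi (hcir i) (hcir (i+1))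
    rw [show i+1+1 = i+2 by ring] at hc
    refine span_eq_of_cross (vsub_ne_zero.mpr (hV i).symm)
      (vsub_ne_zero.mpr (hV (i+2)).symm) ?_
    rw [hw0 i, hw1 i, hw0 (i+2), hw1 (i+2)]
    linear_combination -hc
  have G : ∀ m t : ℤ, m = t + 2 →
      (ℝ ∙ (P m 1 -ᵥ P m 0)) = ℝ ∙ (P t 1 -ᵥ P t 0) := by
    intro m t hmt
    subst hmt
    exact (hkey t).symm
  have heven : ∀ n : ℤ, (ℝ ∙ (P (2*n) 1 -ᵥ P (2*n) 0)) = ℝ ∙ (P 0 1 -ᵥ P 0 0) := by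
    intro n
    induction n using Int.induction_on with
    | zero => norm_num
    | succ k ih => exact (G (2*(k+1)) (2*k) (by ring)).trans ih
    | pred k ih => exact ((G (2*(-k : ℤ)) (2*(-k-1)) (by ring)).symm).trans ih
  have hodd : ∀ n : ℤ, (ℝ ∙ (P (2*n+1) 1 -ᵥ P (2*n+1) 0)) = ℝ ∙ (P 1 1 -ᵥ P 1 0) := by
    intro n
    induction n using Int.induction_on with
    | zero => norm_num
    | succ k ih => exact (G (2*(k+1)+1) (2*k+1) (by ring)).trans ih
    | pred k ih => exact ((G (2*(-k : ℤ)+1) (2*(-k-1)+1) (by ring)).symm).trans ih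
  constructor
  · intro i k
    exact parallel_of_span ((heven i).trans (heven k).symm)
  · intro i k
    exact parallel_of_span ((hodd i).trans (hodd k).symm)
end

section
/- Let φ₁, φ₂ be quadratic forms on ℝ^(n+1) corresponding to distinct quadrics, and let F_U, F_W be two distinct n-dimensional linear subspaces (hyperplanes) of ℝ^(n+1), with F := F_U ∩ F_W of dimension n-1. Let φ_U be a symmetric bilinear form on F_U and φ_W a symmetric bilinear form on F_W such that φ_U and φ_W agree on F × F. Then there exists a symmetric bilinear form φ on ℝ^(n+1) restricting to φ_U on F_U and to φ_W on F_W; moreover the set of such extensions is a one-parameter family (a pencil), and if the restriction of φ_U to F is not identically zero then this pencil of quadrics containing both restricted quadrics is uniquely determined. -/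
set_option maxHeartbeats 1000000


/-- `φ` is a symmetric bilinear form on `ℝⁿ⁺¹` restricting to `φU` on the
hyperplane `FU` and to `φW` on the hyperplane `FW`. -/
def IsSymmExtension (n : ℕ) (FU FW : Submodule ℝ (Fin (n + 1) → ℝ))
    (φU : LinearMap.BilinForm ℝ FU) (φW : LinearMap.BilinForm ℝ FW)
    (φ : LinearMap.BilinForm ℝ (Fin (n + 1) → ℝ)) : Prop :=
  (∀ x y, φ x y = φ y x) ∧
  (∀ x y : FU, φ x.1 y.1 = φU x y) ∧
  (∀ x y : FW, φ x.1 y.1 = φW x y)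

lemma exists_pencil (n : ℕ) (FU FW : Submodule ℝ (Fin (n + 1) → ℝ))
    (hFU : Module.finrank ℝ FU = n) (hFW : Module.finrank ℝ FW = n)
    (hne : FU ≠ FW)
    (hF : Module.finrank ℝ ↥(FU ⊓ FW) = n - 1)
    (φU : LinearMap.BilinForm ℝ FU) (φW : LinearMap.BilinForm ℝ FW)
    (hU : ∀ x y, φU x y = φU y x) (hW : ∀ x y, φW x y = φW y x)
    (hagree : ∀ (x y : Fin (n + 1) → ℝ) (hx : x ∈ FU ⊓ FW) (hy : y ∈ FU ⊓ FW),
      φU ⟨x, hx.1⟩ ⟨y, hy.1⟩ = φW ⟨x, hx.2⟩ ⟨y, hy.2⟩) :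
    ∃ φ₀ δ : LinearMap.BilinForm ℝ (Fin (n + 1) → ℝ),
      δ ≠ 0 ∧
      (∀ t : ℝ, IsSymmExtension n FU FW φU φW (φ₀ + t • δ)) ∧
      (∀ φ, IsSymmExtension n FU FW φU φW φ → ∃ t : ℝ, φ = φ₀ + t • δ) := by
  classical
  -- n ≥ 1
  obtain ⟨m, rfl⟩ : ∃ m, n = m + 1 := by
    cases n with
    | zero =>
      exact absurd (by rw [Submodule.finrank_eq_zero.mp hFU,
        Submodule.finrank_eq_zero.mp hFW]) hne
    | succ m => exact ⟨m, rfl⟩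
  -- pick u ∈ FU \ FW, w ∈ FW \ FU
  obtain ⟨u, huU, huW⟩ : ∃ u ∈ FU, u ∉ FW := by
    rw [← SetLike.not_le_iff_exists]
    intro h
    exact hne (Submodule.eq_of_le_of_finrank_le h (by rw [hFU, hFW]))
  obtain ⟨w, hwW, hwU⟩ : ∃ w ∈ FW, w ∉ FU := by
    rw [← SetLike.not_le_iff_exists]
    intro h
    exact hne.symm (Submodule.eq_of_le_of_finrank_le h (by rw [hFU, hFW]))
  set F := FU ⊓ FW with hFdef
  -- the decomposition equivalence
  set L : ℝ × ℝ × F →ₗ[ℝ] (Fin (m + 1 + 1) → ℝ) :=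
    (LinearMap.toSpanSingleton ℝ _ u).coprod
      ((LinearMap.toSpanSingleton ℝ _ w).coprod F.subtype) with hL
  have hLapp : ∀ s t (z : F), L (s, t, z) = s • u + t • w + (z : Fin (m + 1 + 1) → ℝ) := by
    intro s t z
    simp [hL, LinearMap.toSpanSingleton_apply, add_assoc]
  have hLinj : Function.Injective L := by
    rw [← LinearMap.ker_eq_bot, eq_bot_iff]
    rintro ⟨s, t, z⟩ hz
    simp only [LinearMap.mem_ker] at hz
    rw [hLapp] at hz
    have hz2 : s • u + (t • w + (z : Fin (m + 1 + 1) → ℝ)) = 0 := by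
      rw [← add_assoc]; exact hz
    clear hz; rename' hz2 => hz
    have hs : s = 0 := by
      by_contra hs
      apply huW
      have h2 : s • u ∈ FW := by
        rw [eq_neg_of_add_eq_zero_left hz]
        exact neg_mem (add_mem (FW.smul_mem t hwW) z.2.2)
      have := FW.smul_mem s⁻¹ h2
      rwa [smul_smul, inv_mul_cancel₀ hs, one_smul] at this
    subst hs
    rw [zero_smul, zero_add] at hz
    have ht : t = 0 := by
      by_contra ht
      apply hwU
      have h2 : t • w ∈ FU := by
        rw [eq_neg_of_add_eq_zero_left hz]
        exact neg_mem z.2.1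
      have := FU.smul_mem t⁻¹ h2
      rwa [smul_smul, inv_mul_cancel₀ ht, one_smul] at this
    subst ht
    rw [zero_smul, zero_add] at hz
    have hzz : z = 0 := by
      exact_mod_cast Submodule.coe_eq_zero.mp hz
    simp [Submodule.mem_bot, Prod.ext_iff, hzz]
  have hrank : Module.finrank ℝ (ℝ × ℝ × F) = Module.finrank ℝ (Fin (m + 1 + 1) → ℝ) := by
    rw [Module.finrank_prod, Module.finrank_prod, Module.finrank_self, hF,
      Module.finrank_fin_fun]
    omega
  set e : (ℝ × ℝ × F) ≃ₗ[ℝ] (Fin (m + 1 + 1) → ℝ) :=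
    LinearMap.linearEquivOfInjective L hLinj hrank with he
  have heapp : ∀ p, e p = L p := fun p => rfl
  set d : (Fin (m + 1 + 1) → ℝ) ≃ₗ[ℝ] ℝ × ℝ × F := e.symm with hd
  set a : (Fin (m + 1 + 1) → ℝ) → ℝ := fun x => (d x).1 with ha
  set b : (Fin (m + 1 + 1) → ℝ) → ℝ := fun x => (d x).2.1 with hb
  set q : (Fin (m + 1 + 1) → ℝ) → F := fun x => (d x).2.2 with hq
  have hdec : ∀ x, a x • u + b x • w + ((q x : Fin (m + 1 + 1) → ℝ)) = x := by
    intro x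
    calc a x • u + b x • w + (q x : Fin (m + 1 + 1) → ℝ)
        = L (a x, b x, q x) := (hLapp _ _ _).symm
      _ = L (d x) := rfl
      _ = e (d x) := (heapp _).symm
      _ = x := e.apply_symm_apply x
  have ha_add : ∀ x y, a (x + y) = a x + a y := fun x y => by simp [ha, map_add]
  have ha_smul : ∀ (c : ℝ) x, a (c • x) = c * a x := fun c x => by simp [ha, map_smul]
  have hb_add : ∀ x y, b (x + y) = b x + b y := fun x y => by simp [hb, map_add]
  have hb_smul : ∀ (c : ℝ) x, b (c • x) = c * b x := fun c x => by simp [hb, map_smul]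
  have hq_add : ∀ x y, q (x + y) = q x + q y := fun x y => by simp [hq, map_add]
  have hq_smul : ∀ (c : ℝ) x, q (c • x) = c • q x := fun c x => by simp [hq, map_smul]
  have hdu : d u = (1, 0, 0) := by
    rw [hd, LinearEquiv.symm_apply_eq, heapp, hLapp]
    simp
  have hdw : d w = (0, 1, 0) := by
    rw [hd, LinearEquiv.symm_apply_eq, heapp, hLapp]
    simp
  have hau : a u = 1 := by simp [ha, hdu]
  have hbu : b u = 0 := by simp [hb, hdu]
  have hqu : q u = 0 := by simp [hq, hdu]
  have haw : a w = 0 := by simp [ha, hdw]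
  have hbw : b w = 1 := by simp [hb, hdw]
  have hqw : q w = 0 := by simp [hq, hdw]
  have hbU : ∀ x ∈ FU, b x = 0 := by
    intro x hx
    by_contra hb0
    apply hwU
    have h2 : b x • w ∈ FU := by
      have h1 : b x • w = (a x • u + b x • w + (q x : Fin (m + 1 + 1) → ℝ))
          - a x • u - (q x : Fin (m + 1 + 1) → ℝ) := by abel
      rw [hdec x] at h1
      rw [h1]
      exact sub_mem (sub_mem hx (FU.smul_mem _ huU)) (q x).2.1
    have := FU.smul_mem (b x)⁻¹ h2
    rwa [smul_smul, inv_mul_cancel₀ hb0, one_smul] at this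
  have haW : ∀ x ∈ FW, a x = 0 := by
    intro x hx
    by_contra ha0
    apply huW
    have h2 : a x • u ∈ FW := by
      have h1 : a x • u = (a x • u + b x • w + (q x : Fin (m + 1 + 1) → ℝ))
          - b x • w - (q x : Fin (m + 1 + 1) → ℝ) := by abel
      rw [hdec x] at h1
      rw [h1]
      exact sub_mem (sub_mem hx (FW.smul_mem _ hwW)) (q x).2.2
    have := FW.smul_mem (a x)⁻¹ h2
    rwa [smul_smul, inv_mul_cancel₀ ha0, one_smul] at this
  set uU : FU := ⟨u, huU⟩ with huUdef
  set wW : FW := ⟨w, hwW⟩ with hwWdef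
  set qU : (Fin (m + 1 + 1) → ℝ) → FU := fun x => ⟨(q x : Fin (m + 1 + 1) → ℝ), (q x).2.1⟩ with hqUdef
  set qW : (Fin (m + 1 + 1) → ℝ) → FW := fun x => ⟨(q x : Fin (m + 1 + 1) → ℝ), (q x).2.2⟩ with hqWdef
  have hqU_add : ∀ x y, qU (x + y) = qU x + qU y := fun x y =>
    Subtype.ext (by simp [hqUdef, hq_add])
  have hqU_smul : ∀ (c : ℝ) x, qU (c • x) = c • qU x := fun c x =>
    Subtype.ext (by simp [hqUdef, hq_smul])
  have hqW_add : ∀ x y, qW (x + y) = qW x + qW y := fun x y =>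
    Subtype.ext (by simp [hqWdef, hq_add])
  have hqW_smul : ∀ (c : ℝ) x, qW (c • x) = c • qW x := fun c x =>
    Subtype.ext (by simp [hqWdef, hq_smul])
  set B : (Fin (m + 1 + 1) → ℝ) → (Fin (m + 1 + 1) → ℝ) → ℝ := fun x y =>
    a x * a y * φU uU uU + b x * b y * φW wW wW
    + a x * φU uU (qU y) + a y * φU uU (qU x)
    + b x * φW wW (qW y) + b y * φW wW (qW x)
    + φU (qU x) (qU y) with hB
  set D : (Fin (m + 1 + 1) → ℝ) → (Fin (m + 1 + 1) → ℝ) → ℝ := fun x y =>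
    a x * b y + a y * b x with hD
  set φ0 : LinearMap.BilinForm ℝ (Fin (m + 1 + 1) → ℝ) := LinearMap.mk₂ ℝ B
    (by intro x x' y
        simp only [hB, ha_add, hb_add, hqU_add, hqW_add, map_add, LinearMap.add_apply]
        ring)
    (by intro c x y
        simp only [hB, ha_smul, hb_smul, hqU_smul, hqW_smul, map_smul, LinearMap.smul_apply,
          smul_eq_mul]
        ring)
    (by intro x y y'
        simp only [hB, ha_add, hb_add, hqU_add, hqW_add, map_add, LinearMap.add_apply]
        ring)
    (by intro c x y
        simp only [hB, ha_smul, hb_smul, hqU_smul, hqW_smul, map_smul, LinearMap.smul_apply,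
          smul_eq_mul]
        ring) with hφ0
  set δ0 : LinearMap.BilinForm ℝ (Fin (m + 1 + 1) → ℝ) := LinearMap.mk₂ ℝ D
    (by intro x x' y; simp only [hD, ha_add, hb_add]; ring)
    (by intro c x y; simp only [hD, ha_smul, hb_smul, smul_eq_mul]; ring)
    (by intro x y y'; simp only [hD, ha_add, hb_add]; ring)
    (by intro c x y; simp only [hD, ha_smul, hb_smul, smul_eq_mul]; ring) with hδ0
  have hφ0app : ∀ x y, φ0 x y = B x y := fun x y => rfl
  have hδ0app : ∀ x y, δ0 x y = D x y := fun x y => rfl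
  have hδne : δ0 ≠ 0 := by
    intro h
    have h1 : δ0 u w = 0 := by rw [h]; rfl
    rw [hδ0app] at h1
    simp only [hD] at h1
    simp only [hau, hbu, haw, hbw] at h1
    norm_num at h1
  have hdecU : ∀ p : FU, p = a p.1 • uU + qU p.1 := by
    intro p
    apply Subtype.ext
    have h0 := hdec p.1
    rw [hbU p.1 p.2, zero_smul, add_zero] at h0
    simp only [Submodule.coe_add, SetLike.val_smul, huUdef, hqUdef]
    exact h0.symm
  have hdecW : ∀ p : FW, p = b p.1 • wW + qW p.1 := by
    intro p
    apply Subtype.ext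
    have h0 := hdec p.1
    rw [haW p.1 p.2, zero_smul, zero_add] at h0
    simp only [Submodule.coe_add, SetLike.val_smul, hwWdef, hqWdef]
    exact h0.symm
  have hQagree : ∀ x y, φU (qU x) (qU y) = φW (qW x) (qW y) := by
    intro x y
    exact hagree _ _ (q x).2 (q y).2
  have hresU : ∀ x y : FU, B x.1 y.1 = φU x y := by
    intro x y
    conv_rhs => rw [hdecU x, hdecU y]
    simp only [map_add, map_smul, LinearMap.add_apply, LinearMap.smul_apply, smul_eq_mul]
    simp only [hB]
    rw [hbU x.1 x.2, hbU y.1 y.2, hU (qU x.1) uU]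
    ring
  have hresW : ∀ x y : FW, B x.1 y.1 = φW x y := by
    intro x y
    conv_rhs => rw [hdecW x, hdecW y]
    simp only [map_add, map_smul, LinearMap.add_apply, LinearMap.smul_apply, smul_eq_mul]
    simp only [hB]
    rw [haW x.1 x.2, haW y.1 y.2, hQagree, hW (qW x.1) wW]
    ring
  have hBsymm : ∀ x y, B x y = B y x := by
    intro x y
    simp only [hB]
    rw [hU (qU x) (qU y)]
    ring
  have hext : ∀ t : ℝ, IsSymmExtension (m + 1) FU FW φU φW (φ0 + t • δ0) := by
    intro t
    refine ⟨?_, ?_, ?_⟩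
    · intro x y
      simp only [LinearMap.add_apply, LinearMap.smul_apply, smul_eq_mul, hφ0app, hδ0app]
      rw [hBsymm]
      simp only [hD]
      ring
    · intro x y
      simp only [LinearMap.add_apply, LinearMap.smul_apply, smul_eq_mul, hφ0app, hδ0app]
      have hD0 : D x.1 y.1 = 0 := by
        simp only [hD]
        rw [hbU x.1 x.2, hbU y.1 y.2]
        ring
      rw [hD0, mul_zero, add_zero, hresU]
    · intro x y
      simp only [LinearMap.add_apply, LinearMap.smul_apply, smul_eq_mul, hφ0app, hδ0app]
      have hD0 : D x.1 y.1 = 0 := by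
        simp only [hD]
        rw [haW x.1 x.2, haW y.1 y.2]
        ring
      rw [hD0, mul_zero, add_zero, hresW]
  have key : ∀ φ, IsSymmExtension (m + 1) FU FW φU φW φ →
      ∀ x y, φ x y = B x y + φ u w * D x y := by
    intro φ hφ x y
    obtain ⟨hsym, hrU, hrW⟩ := hφ
    have hdx : x = a x • u + b x • w + ((q x : Fin (m + 1 + 1) → ℝ)) := (hdec x).symm
    have hdy : y = a y • u + b y • w + ((q y : Fin (m + 1 + 1) → ℝ)) := (hdec y).symm
    have e1 : φ u u = φU uU uU := hrU uU uU
    have e2 : φ u ((q y : Fin (m + 1 + 1) → ℝ)) = φU uU (qU y) := hrU uU (qU y)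
    have e3 : φ ((q x : Fin (m + 1 + 1) → ℝ)) u = φU uU (qU x) :=
      (hrU (qU x) uU).trans (hU _ _)
    have e4 : φ w w = φW wW wW := hrW wW wW
    have e5 : φ w ((q y : Fin (m + 1 + 1) → ℝ)) = φW wW (qW y) := hrW wW (qW y)
    have e6 : φ ((q x : Fin (m + 1 + 1) → ℝ)) w = φW wW (qW x) :=
      (hrW (qW x) wW).trans (hW _ _)
    have e7 : φ ((q x : Fin (m + 1 + 1) → ℝ)) ((q y : Fin (m + 1 + 1) → ℝ))
        = φU (qU x) (qU y) := hrU (qU x) (qU y)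
    have e8 : φ w u = φ u w := hsym w u
    conv_lhs => rw [hdx, hdy]
    simp only [map_add, map_smul, LinearMap.add_apply, LinearMap.smul_apply, smul_eq_mul]
    rw [e1, e2, e3, e4, e5, e6, e7, e8]
    simp only [hB, hD]
    ring
  have huniq : ∀ φ, IsSymmExtension (m + 1) FU FW φU φW φ → ∃ t : ℝ, φ = φ0 + t • δ0 := by
    intro φ hφ
    refine ⟨φ u w, ?_⟩
    apply LinearMap.ext; intro x; apply LinearMap.ext; intro y
    rw [key φ hφ x y]
    simp only [LinearMap.add_apply, LinearMap.smul_apply, smul_eq_mul, hφ0app, hδ0app]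
  exact ⟨φ0, δ0, hδne, hext, huniq⟩

lemma span_pair_aux {M : Type*} [AddCommGroup M] [Module ℝ M] (A D : M) (r s : ℝ)
    (hs : s ≠ 0) (x y : M) (hx : x = A + r • D) (hy : y = s • D) :
    Submodule.span ℝ {x, y} = Submodule.span ℝ {A, D} := by
  subst hx hy
  apply le_antisymm
  · rw [Submodule.span_le]
    rintro z (rfl | rfl)
    · exact add_mem (Submodule.subset_span (by simp))
        (Submodule.smul_mem _ _ (Submodule.subset_span (by simp)))
    · exact Submodule.smul_mem _ _ (Submodule.subset_span (by simp))
  · rw [Submodule.span_le]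
    have hD : D ∈ Submodule.span ℝ {A + r • D, s • D} := by
      have h1 := (Submodule.span ℝ {A + r • D, s • D}).smul_mem s⁻¹
        (Submodule.subset_span (show s • D ∈ ({A + r • D, s • D} : Set M) by simp))
      rwa [smul_smul, inv_mul_cancel₀ hs, one_smul] at h1
    rw [Set.insert_subset_iff, Set.singleton_subset_iff]
    constructor
    · have h2 : (A + r • D) - r • D ∈ Submodule.span ℝ {A + r • D, s • D} :=
        sub_mem (Submodule.subset_span (by simp)) (Submodule.smul_mem _ _ hD)
      have h3 : (A + r • D) - r • D = A := by abel
      rwa [h3] at h2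
    · exact hD

/-- Given symmetric bilinear forms `φU`, `φW` on two distinct hyperplanes
`FU`, `FW` of `ℝⁿ⁺¹` that agree on `F = FU ∩ FW`, there exists a symmetric
bilinear form on `ℝⁿ⁺¹` extending both; the extensions form a one-parameter
family (a pencil), and if `φU` does not vanish identically on `F` then this
pencil is uniquely determined. -/
theorem stmt14 (n : ℕ) (FU FW : Submodule ℝ (Fin (n + 1) → ℝ))
    (hFU : Module.finrank ℝ FU = n) (hFW : Module.finrank ℝ FW = n)
    (hne : FU ≠ FW)
    (hF : Module.finrank ℝ ↥(FU ⊓ FW) = n - 1)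
    (φU : LinearMap.BilinForm ℝ FU) (φW : LinearMap.BilinForm ℝ FW)
    (hU : ∀ x y, φU x y = φU y x) (hW : ∀ x y, φW x y = φW y x)
    (hagree : ∀ (x y : Fin (n + 1) → ℝ) (hx : x ∈ FU ⊓ FW) (hy : y ∈ FU ⊓ FW),
      φU ⟨x, hx.1⟩ ⟨y, hy.1⟩ = φW ⟨x, hx.2⟩ ⟨y, hy.2⟩) :
    (∃ φ₀ δ : LinearMap.BilinForm ℝ (Fin (n + 1) → ℝ),
      (∀ t : ℝ, IsSymmExtension n FU FW φU φW (φ₀ + t • δ)) ∧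
      (∀ φ, IsSymmExtension n FU FW φU φW φ → ∃ t : ℝ, φ = φ₀ + t • δ)) ∧
    ((∃ (x y : Fin (n + 1) → ℝ) (hx : x ∈ FU ⊓ FW) (hy : y ∈ FU ⊓ FW),
        φU ⟨x, hx.1⟩ ⟨y, hy.1⟩ ≠ 0) →
      ∀ φ₀ δ φ₀' δ' : LinearMap.BilinForm ℝ (Fin (n + 1) → ℝ),
        ((∀ t : ℝ, IsSymmExtension n FU FW φU φW (φ₀ + t • δ)) ∧
          (∀ φ, IsSymmExtension n FU FW φU φW φ → ∃ t : ℝ, φ = φ₀ + t • δ)) →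
        ((∀ t : ℝ, IsSymmExtension n FU FW φU φW (φ₀' + t • δ')) ∧
          (∀ φ, IsSymmExtension n FU FW φU φW φ → ∃ t : ℝ, φ = φ₀' + t • δ')) →
        Submodule.span ℝ {φ₀, δ} = Submodule.span ℝ {φ₀', δ'}) := by
  obtain ⟨Φ, Δ, hΔne, hext, huniq⟩ :=
    exists_pencil n FU FW hFU hFW hne hF φU φW hU hW hagree
  constructor
  · exact ⟨Φ, Δ, hext, huniq⟩
  · rintro - φ₀ δ φ₀' δ' ⟨hP1, hP2⟩ ⟨hP1', hP2'⟩
    have key : ∀ (ψ₀ ψ : LinearMap.BilinForm ℝ (Fin (n + 1) → ℝ)),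
        (∀ φ, IsSymmExtension n FU FW φU φW φ → ∃ t : ℝ, φ = ψ₀ + t • ψ) →
        Submodule.span ℝ {ψ₀, ψ} = Submodule.span ℝ {Φ, Δ} := by
      intro ψ₀ ψ hP
      obtain ⟨t₁, ht₁⟩ := hP Φ (by simpa using hext 0)
      obtain ⟨t₂, ht₂⟩ := hP (Φ + Δ) (by simpa using hext 1)
      have hΔeq : Δ = (t₂ - t₁) • ψ := by
        have h4 : Δ = (ψ₀ + t₂ • ψ) - (ψ₀ + t₁ • ψ) := by
          rw [← ht₁, ← ht₂]; abel
        rw [h4]; module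
      have hs : t₂ - t₁ ≠ 0 := by
        intro h
        rw [h, zero_smul] at hΔeq
        exact hΔne hΔeq
      have hψ : ψ = (t₂ - t₁)⁻¹ • Δ := by
        rw [hΔeq, smul_smul, inv_mul_cancel₀ hs, one_smul]
      have hψ₀ : ψ₀ = Φ + (-(t₁ * (t₂ - t₁)⁻¹)) • Δ := by
        have : ψ₀ = Φ - t₁ • ψ := by rw [ht₁]; abel
        rw [this, hψ, smul_smul]
        module
      exact span_pair_aux Φ Δ (-(t₁ * (t₂ - t₁)⁻¹)) (t₂ - t₁)⁻¹
        (inv_ne_zero hs) ψ₀ ψ hψ₀ hψ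
    rw [key φ₀ δ hP2, key φ₀' δ' hP2']
end
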